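/- Let m ≥ 2 and suppose 𝔼[X] = 𝔼[Y] = 0. Then the reduced estimator c₃⁽ᶠ⁾ = (m/(m−1))(\overline{XYZ} − \overline{XY}·Z̄) satisfies 𝔼[c₃⁽ᶠ⁾] = 𝔼[XYZ] − 𝔼[XY]𝔼[Z], which under the hypotheses equals the third multivariate cumulant C₃(x,y,z). -/

import Mathlib

open MeasureTheory ProbabilityTheory

private lemma enn1 : (1:ENNReal)/(3/2) = 1/3 + 1/3 := by
  rw [one_div, ENNReal.inv_div (by norm_num) (by norm_num), ENNReal.div_add_div_same]
  norm_num

private lemma enn2 : (1:ENNReal)/1 = 1/(3/2) + 1/3 := by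
  rw [one_div (3/2 : ENNReal), ENNReal.inv_div (by norm_num) (by norm_num), one_div,
    ENNReal.div_add_div_same, show (2+1 : ENNReal) = 3 by norm_num,
    ENNReal.div_self (by norm_num) (by norm_num)]
  norm_num

private lemma enn3 : (1:ENNReal) ≤ 3/2 := by
  rw [ENNReal.le_div_iff_mul_le (Or.inl (by norm_num)) (Or.inl (by norm_num))]; norm_num

set_option maxHeartbeats 1000000 in
theorem unbiased_c3_f {Ω : Type*} [MeasurableSpace Ω] (μ : Measure Ω) [IsProbabilityMeasure μ]
    (m : ℕ) (hm : 2 ≤ m)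
    (X Y Z : Fin m → Ω → ℝ)
    (hXmeas : ∀ i, Measurable (X i))
    (hYmeas : ∀ i, Measurable (Y i))
    (hZmeas : ∀ i, Measurable (Z i))
    (hindep : iIndepFun (fun i ω => (X i ω, Y i ω, Z i ω)) μ)
    (hident : ∀ i, IdentDistrib (fun ω => (X i ω, Y i ω, Z i ω)) (fun ω => (X ⟨0, by omega⟩ ω, Y ⟨0, by omega⟩ ω, Z ⟨0, by omega⟩ ω)) μ μ)
    (hX3 : MemLp (X ⟨0, by omega⟩) 3 μ)
    (hY3 : MemLp (Y ⟨0, by omega⟩) 3 μ)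
    (hZ3 : MemLp (Z ⟨0, by omega⟩) 3 μ)
    (hEX : (∫ ω, X ⟨0, by omega⟩ ω ∂μ) = 0)
    (hEY : (∫ ω, Y ⟨0, by omega⟩ ω ∂μ) = 0) :
    (∫ ω, ((m:ℝ) / ((m:ℝ)-1)) * (((m:ℝ)⁻¹ * ∑ i, X i ω * Y i ω * Z i ω) - ((m:ℝ)⁻¹ * ∑ i, X i ω * Y i ω) * ((m:ℝ)⁻¹ * ∑ i, Z i ω)) ∂μ) = (∫ ω, X ⟨0, by omega⟩ ω * Y ⟨0, by omega⟩ ω * Z ⟨0, by omega⟩ ω ∂μ) - (∫ ω, X ⟨0, by omega⟩ ω * Y ⟨0, by omega⟩ ω ∂μ) * (∫ ω, Z ⟨0, by omega⟩ ω ∂μ) ∧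
    (∫ ω, X ⟨0, by omega⟩ ω * Y ⟨0, by omega⟩ ω * Z ⟨0, by omega⟩ ω ∂μ) - (∫ ω, X ⟨0, by omega⟩ ω * Y ⟨0, by omega⟩ ω ∂μ) * (∫ ω, Z ⟨0, by omega⟩ ω ∂μ) = (∫ ω, X ⟨0, by omega⟩ ω * Y ⟨0, by omega⟩ ω * Z ⟨0, by omega⟩ ω ∂μ) - (∫ ω, X ⟨0, by omega⟩ ω * Y ⟨0, by omega⟩ ω ∂μ) * (∫ ω, Z ⟨0, by omega⟩ ω ∂μ) - (∫ ω, X ⟨0, by omega⟩ ω * Z ⟨0, by omega⟩ ω ∂μ) * (∫ ω, Y ⟨0, by omega⟩ ω ∂μ) - (∫ ω, Y ⟨0, by omega⟩ ω * Z ⟨0, by omega⟩ ω ∂μ) * (∫ ω, X ⟨0, by omega⟩ ω ∂μ) + 2 * (∫ ω, X ⟨0, by omega⟩ ω ∂μ) * (∫ ω, Y ⟨0, by omega⟩ ω ∂μ) * (∫ ω, Z ⟨0, by omega⟩ ω ∂μ) := by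
  constructor
  · -- main computation
    set i0 : Fin m := ⟨0, by omega⟩ with hi0def
    have mB : Measurable (fun p : ℝ × ℝ × ℝ => p.1 * p.2.1) := by fun_prop
    have mC : Measurable (fun p : ℝ × ℝ × ℝ => p.2.2) := by fun_prop
    have mA : Measurable (fun p : ℝ × ℝ × ℝ => p.1 * p.2.1 * p.2.2) := by fun_prop
    -- identically distributed transfers
    have hAid : ∀ i, IdentDistrib (fun ω => X i ω * Y i ω * Z i ω)
        (fun ω => X i0 ω * Y i0 ω * Z i0 ω) μ μ := fun i => (hident i).comp mA
    have hBid : ∀ i, IdentDistrib (fun ω => X i ω * Y i ω)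
        (fun ω => X i0 ω * Y i0 ω) μ μ := fun i => (hident i).comp mB
    have hCid : ∀ i, IdentDistrib (Z i) (Z i0) μ μ := fun i => (hident i).comp mC
    -- integrability at index 0
    have hB0mem : MemLp (fun ω => X i0 ω * Y i0 ω) (3/2) μ :=
      MemLp.smul (𝕜 := ℝ) hY3 hX3 (r := 3/2) (hpqr := ⟨by simpa only [one_div] using enn1.symm⟩)
    have hA0int : Integrable (fun ω => X i0 ω * Y i0 ω * Z i0 ω) μ :=
      memLp_one_iff_integrable.mp (MemLp.smul (𝕜 := ℝ) hZ3 hB0mem (r := 1) (hpqr := ⟨by simpa only [one_div] using enn2.symm⟩))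
    have hB0int : Integrable (fun ω => X i0 ω * Y i0 ω) μ := hB0mem.integrable enn3
    have hC0int : Integrable (Z i0) μ := hZ3.integrable (by norm_num)
    have hAint : ∀ i, Integrable (fun ω => X i ω * Y i ω * Z i ω) μ :=
      fun i => (hAid i).integrable_iff.mpr hA0int
    have hBint : ∀ i, Integrable (fun ω => X i ω * Y i ω) μ :=
      fun i => (hBid i).integrable_iff.mpr hB0int
    have hCint : ∀ i, Integrable (Z i) μ :=
      fun i => (hCid i).integrable_iff.mpr hC0int
    -- independence of X i * Y i and Z j for i ≠ j
    have hBC : ∀ i j, i ≠ j → IndepFun (fun ω => X i ω * Y i ω) (Z j) μ :=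
      fun i j hij => (hindep.indepFun hij).comp mB mC
    -- notation for the three key integrals
    set I3 := ∫ ω, X i0 ω * Y i0 ω * Z i0 ω ∂μ with hI3
    set I2 := ∫ ω, X i0 ω * Y i0 ω ∂μ with hI2
    set I1 := ∫ ω, Z i0 ω ∂μ with hI1
    -- integrability of the cross terms
    have hBCint : ∀ i j, Integrable (fun ω => X i ω * Y i ω * Z j ω) μ := by
      intro i j
      rcases eq_or_ne i j with rfl | hij
      · exact hAint i
      · exact (hBC i j hij).integrable_mul (hBint i) (hCint j)
    -- value of cross terms
    have hBCval : ∀ i j, (∫ ω, X i ω * Y i ω * Z j ω ∂μ)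
        = if i = j then I3 else I2 * I1 := by
      intro i j
      rcases eq_or_ne i j with rfl | hij
      · rw [if_pos rfl, hI3]
        exact (hAid i).integral_eq
      · rw [if_neg hij, hI2, hI1]
        exact ((hBC i j hij).integral_mul_eq_mul_integral (hBint i).aestronglyMeasurable (hCint j).aestronglyMeasurable).trans
          (by rw [(hBid i).integral_eq, (hCid j).integral_eq])
    have hmne : (m:ℝ) ≠ 0 := by positivity
    have hm1ne : (m:ℝ) - 1 ≠ 0 := by
      have : (2:ℝ) ≤ (m:ℝ) := by exact_mod_cast hm
      linarith
    set c : ℝ := (m:ℝ) / ((m:ℝ) - 1) with hc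
    calc (∫ ω, c * (((m:ℝ)⁻¹ * ∑ i, X i ω * Y i ω * Z i ω)
            - ((m:ℝ)⁻¹ * ∑ i, X i ω * Y i ω) * ((m:ℝ)⁻¹ * ∑ i, Z i ω)) ∂μ)
        = ∫ ω, ((∑ i, (c * (m:ℝ)⁻¹) * (X i ω * Y i ω * Z i ω))
            - (∑ i, ∑ j, (c * (m:ℝ)⁻¹ * (m:ℝ)⁻¹) * (X i ω * Y i ω * Z j ω))) ∂μ := by
          refine integral_congr_ae (Filter.Eventually.of_forall fun ω => ?_)
          have h1 : (∑ i, (c * (m:ℝ)⁻¹) * (X i ω * Y i ω * Z i ω))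
              = (c * (m:ℝ)⁻¹) * ∑ i, X i ω * Y i ω * Z i ω := (Finset.mul_sum _ _ _).symm
          have h2 : (∑ i, ∑ j, (c * (m:ℝ)⁻¹ * (m:ℝ)⁻¹) * (X i ω * Y i ω * Z j ω))
              = (c * (m:ℝ)⁻¹ * (m:ℝ)⁻¹) * ((∑ i, X i ω * Y i ω) * (∑ j, Z j ω)) := by
            rw [Finset.sum_mul_sum, Finset.mul_sum]
            exact Finset.sum_congr rfl fun i _ => (Finset.mul_sum _ _ _).symm
          simp only [h1, h2]
          ring
      _ = (∑ i, ∫ ω, (c * (m:ℝ)⁻¹) * (X i ω * Y i ω * Z i ω) ∂μ)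
            - (∑ i, ∫ ω, ∑ j, (c * (m:ℝ)⁻¹ * (m:ℝ)⁻¹) * (X i ω * Y i ω * Z j ω) ∂μ) := by
          rw [integral_sub, integral_finset_sum _ (fun i _ => ((hAint i).const_mul _)),
            integral_finset_sum _ (fun i _ => integrable_finset_sum _
              (fun j _ => ((hBCint i j).const_mul _)))]
          · exact integrable_finset_sum _ (fun i _ => ((hAint i).const_mul _))
          · exact integrable_finset_sum _ (fun i _ => integrable_finset_sum _
              (fun j _ => ((hBCint i j).const_mul _)))
      _ = (∑ _i : Fin m, (c * (m:ℝ)⁻¹) * I3)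
            - (∑ i : Fin m, ∑ j : Fin m, (c * (m:ℝ)⁻¹ * (m:ℝ)⁻¹) * (if i = j then I3 else I2 * I1)) := by
          congr 1
          · refine Finset.sum_congr rfl fun i _ => ?_
            rw [integral_const_mul _ _, hI3, (hAid i).integral_eq]
          · refine Finset.sum_congr rfl fun i _ => ?_
            rw [integral_finset_sum _ (fun j _ => ((hBCint i j).const_mul _))]
            exact Finset.sum_congr rfl fun j _ => by rw [integral_const_mul _ _, hBCval i j]
      _ = I3 - I2 * I1 := by
          have hinner : ∀ i : Fin m, (∑ j : Fin m, (c * (m:ℝ)⁻¹ * (m:ℝ)⁻¹) * (if i = j then I3 else I2 * I1))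
              = (c * (m:ℝ)⁻¹ * (m:ℝ)⁻¹) * ((m:ℝ) * (I2 * I1) + (I3 - I2 * I1)) := by
            intro i
            rw [← Finset.mul_sum]
            congr 1
            have h : ∀ j : Fin m, (if i = j then I3 else I2 * I1)
                = I2 * I1 + (if i = j then I3 - I2 * I1 else 0) := by
              intro j; split <;> ring
            rw [Finset.sum_congr rfl fun j _ => h j, Finset.sum_add_distrib,
              Finset.sum_const, Finset.sum_ite_eq, if_pos (Finset.mem_univ i),
              Finset.card_univ, Fintype.card_fin, nsmul_eq_mul]
          rw [Finset.sum_congr rfl fun i _ => hinner i, Finset.sum_const, Finset.sum_const,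
            Finset.card_univ, Fintype.card_fin, nsmul_eq_mul, nsmul_eq_mul, hc]
          field_simp
          ring
  · rw [hEX, hEY]; ring
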